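/- For all r ∈ ℕ ∪ {0}, ξ, s ∈ ℕ⁺, there exists Ω ∈ ℕ⁺ with the following property. Let G be a graph and let (W,Λ) be an (r,Ω)-web in G. Then one of the following holds: (a) there exist pairwise disjoint subsets X_1, …, X_ξ of V(G), each of cardinality at most max{r+3, 2r}, such that for all distinct i, j ∈ {1, …, ξ}, the sets X_i and X_j are not anticomplete in G; or (b) there exists S ⊆ W with |S| = s such that S is a stable set in G, for all three vertices x, y, z ∈ S the vertex x is anticomplete to Λ*_{y,z}, and for all distinct 2-subsets {x,y}, {x',y'} of S the sets Λ*_{x,y} and Λ*_{x',y'} are anticomplete in G. -/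

import Mathlib

/-!
Common definitions: anticomplete sets, stable sets, induced paths,
and webs, following the paper's terminology.
-/

variable {V : Type} {α : Type}

/-- Two vertex sets `X` and `Y` are *anticomplete* in `G` if there is no edge of `G`
with an end in `X` and an end in `Y`. -/
def Anticomplete (G : SimpleGraph V) (X Y : Set V) : Prop :=
  ∀ ⦃x⦄, x ∈ X → ∀ ⦃y⦄, y ∈ Y → ¬ G.Adj x y

/-- A *stable set* in `G` is a set of pairwise non-adjacent vertices. -/
def StableSet (G : SimpleGraph V) (S : Set V) : Prop :=
  ∀ ⦃x⦄, x ∈ S → ∀ ⦃y⦄, y ∈ S → ¬ G.Adj x y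

/-- A walk `p` is a *path in `G`* in the sense of the paper: a path which is moreover
an induced subgraph of `G` (no repeated vertices, and every edge of `G` between two
vertices of `p` is an edge of `p`). -/
def IsInducedPath (G : SimpleGraph V) {x y : V} (p : G.Walk x y) : Prop :=
  p.IsPath ∧ ∀ u v, u ∈ p.support → v ∈ p.support → G.Adj u v → s(u, v) ∈ p.edges

/-- The vertex set of a walk. -/
def walkVerts (G : SimpleGraph V) {x y : V} (p : G.Walk x y) : Set V :=
  {v | v ∈ p.support}

/-- The *interior* of a path with ends `x` and `y`: all of its vertices other than
its ends. -/
def walkInterior (G : SimpleGraph V) {x y : V} (p : G.Walk x y) : Set V :=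
  {v | v ∈ p.support} \ {x, y}

/-- `(W, Λ)` is a *web* in `G`: `Λ` assigns to each (ordered, for convenience of
formalization) pair of distinct vertices of `W` a path in `G` between them, the paths
assigned to `(x, y)` and `(y, x)` being reverses of one another (so that `Λ` really
is defined on 2-subsets of `W`), and the paths assigned to distinct 2-subsets
`{x, y}` and `{x', y'}` meet exactly in `{x, y} ∩ {x', y'}`. -/
structure IsWeb (G : SimpleGraph V) (W : Finset V)
    (Λ : ∀ x y : V, x ∈ W → y ∈ W → x ≠ y → G.Walk x y) : Prop where
  path : ∀ x y (hx : x ∈ W) (hy : y ∈ W) (hxy : x ≠ y), IsInducedPath G (Λ x y hx hy hxy)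
  symm : ∀ x y (hx : x ∈ W) (hy : y ∈ W) (hxy : x ≠ y),
    Λ y x hy hx hxy.symm = (Λ x y hx hy hxy).reverse
  inter : ∀ x y x' y' (hx : x ∈ W) (hy : y ∈ W) (hx' : x' ∈ W) (hy' : y' ∈ W)
      (hxy : x ≠ y) (hxy' : x' ≠ y'), ({x, y} : Set V) ≠ {x', y'} →
      walkVerts G (Λ x y hx hy hxy) ∩ walkVerts G (Λ x' y' hx' hy' hxy') =
        ({x, y} : Set V) ∩ {x', y'}


set_option linter.unusedSectionVars false
set_option linter.unusedVariables false


open Finset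

/-! ### A 4-uniform hypergraph Ramsey theorem -/

/-- Ramsey property: any `C`-coloring of the `k`-subsets of a set of at least `n` naturals
has a subset of size `m` all of whose `k`-subsets get the same color. -/
def RProp (C : Type) (k m n : ℕ) : Prop :=
  ∀ f : Finset ℕ → C, ∀ A : Finset ℕ, n ≤ A.card →
    ∃ B, B ⊆ A ∧ B.card = m ∧ ∃ c : C, ∀ t, t ⊆ B → t.card = k → f t = c
lemma rprop_zero (C : Type) [Nonempty C] (m : ℕ) : RProp C 0 m m := by
  intro f A hA
  obtain ⟨B, hBA, hB⟩ := A.exists_subset_card_eq hA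
  refine ⟨B, hBA, hB, f ∅, fun t _ ht => ?_⟩
  rw [Finset.card_eq_zero.mp ht]

lemma rprop_step (C : Type) [Fintype C] [DecidableEq C] [Nonempty C] (k : ℕ)
    (H : ∀ m, ∃ n, RProp C k m n) (m : ℕ) : ∃ n, RProp C (k + 1) m n := by
  classical
  choose R hR using H
  set T := Fintype.card C * m + 1 with hT
  -- iterated sizes
  let g : ℕ → ℕ := fun j => Nat.rec 0 (fun _ prev => R prev + 1) j
  have hg : ∀ j, g (j + 1) = R (g j) + 1 := fun j => rfl
  -- inner pre-homogeneous construction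
  have inner : ∀ (j : ℕ) (f : Finset ℕ → C) (A : Finset ℕ), g j ≤ A.card →
      ∃ B, B ⊆ A ∧ B.card = j ∧ ∃ c : ℕ → C,
        ∀ a ∈ B, ∀ t, t ⊆ B → t.card = k → (∀ x ∈ t, a < x) → f (insert a t) = c a := by
    intro j
    induction j with
    | zero =>
      intro f A _
      exact ⟨∅, empty_subset _, card_empty, fun _ => Classical.arbitrary C, by simp⟩
    | succ j ih =>
      intro f A hA
      have hpos : 0 < A.card := lt_of_lt_of_le (by rw [hg]; omega) hA
      have hne : A.Nonempty := card_pos.mp hpos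
      set a := A.min' hne with ha
      have haA : a ∈ A := A.min'_mem hne
      have hA' : R (g j) ≤ (A.erase a).card := by
        rw [card_erase_of_mem haA]
        have := hA; rw [hg] at this; omega
      obtain ⟨B', hB'sub, hB'card, c_a, hc_a⟩ :=
        hR (g j) (fun t => f (insert a t)) (A.erase a) hA'
      obtain ⟨B, hBsub, hBcard, c, hc⟩ := ih f B' (le_of_eq hB'card.symm)
      have hBsub' : B ⊆ A.erase a := hBsub.trans hB'sub
      have haB : a ∉ B := fun h => (mem_erase.mp (hBsub' h)).1 rfl
      refine ⟨insert a B, ?_, ?_, fun x => if x = a then c_a else c x, ?_⟩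
      · exact insert_subset haA (hBsub'.trans (erase_subset _ _))
      · rw [card_insert_of_notMem haB, hBcard]
      · intro a' ha' t ht htk hlt
        rcases mem_insert.mp ha' with rfl | ha'B
        · have hta : a ∉ t := fun h => lt_irrefl a (hlt a h)
          have htB : t ⊆ B := fun x hx => by
            rcases mem_insert.mp (ht hx) with rfl | h
            · exact absurd hx hta
            · exact h
          simp only [if_pos rfl]
          exact hc_a t (htB.trans hBsub) htk
        · have haa' : a < a' := by
            have h1 := A.min'_le a' (mem_of_mem_erase (hBsub' ha'B))
            have h2 : a' ≠ a := (mem_erase.mp (hBsub' ha'B)).1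
            exact lt_of_le_of_ne h1 (Ne.symm h2)
          have htB : t ⊆ B := fun x hx => by
            rcases mem_insert.mp (ht hx) with rfl | h
            · exact absurd (hlt a hx) (not_lt.mpr (le_of_lt haa'))
            · exact h
          have ha'ne : a' ≠ a := ne_of_gt haa'
          simp only [if_neg ha'ne]
          exact hc a' ha'B t htB htk hlt
  -- assemble
  refine ⟨g T, fun f A hA => ?_⟩
  obtain ⟨B, hBA, hBcard, c, hc⟩ := inner T f A hA
  have hpig : (Finset.univ : Finset C).card * m < B.card := by
    rw [hBcard, card_univ]; omega
  obtain ⟨v, _, hv⟩ := exists_lt_card_fiber_of_mul_lt_card_of_maps_to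
    (fun a (_ : a ∈ B) => mem_univ (c a)) hpig
  obtain ⟨B₀, hB₀sub, hB₀card⟩ := Finset.exists_subset_card_eq (le_of_lt hv)
  have hB₀B : B₀ ⊆ B := hB₀sub.trans (filter_subset _ _)
  refine ⟨B₀, hB₀B.trans hBA, hB₀card, v, fun t htB₀ htk => ?_⟩
  have htne : t.Nonempty := by
    rw [← card_pos, htk]; omega
  set a := t.min' htne with ha
  have hat : a ∈ t := t.min'_mem htne
  have h1 : insert a (t.erase a) = t := insert_erase hat
  have h2 : (t.erase a).card = k := by rw [card_erase_of_mem hat, htk]; rfl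
  have h3 : ∀ x ∈ t.erase a, a < x := fun x hx =>
    lt_of_le_of_ne (t.min'_le x (mem_of_mem_erase hx)) (Ne.symm (mem_erase.mp hx).1)
  have h4 : a ∈ B₀ := htB₀ hat
  have h5 : c a = v := (mem_filter.mp (hB₀sub h4)).2
  calc f t = f (insert a (t.erase a)) := by rw [h1]
    _ = c a := hc a (hB₀B h4) (t.erase a) ((erase_subset _ _).trans (htB₀.trans hB₀B)) h2 h3
    _ = v := h5

theorem rprop_exists (C : Type) [Fintype C] [DecidableEq C] [Nonempty C] :
    ∀ k m : ℕ, ∃ n, RProp C k m n := by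
  intro k
  induction k with
  | zero => exact fun m => ⟨m, rprop_zero C m⟩
  | succ k ih => exact rprop_step C k ih

open Classical in
/-- turn a proposition into a boolean, classically -/
noncomputable def pbool (P : Prop) : Bool := if P then true else false

lemma pbool_iff (P : Prop) : pbool P = true ↔ P := by
  unfold pbool; split <;> simp_all

lemma pbool_false_iff (P : Prop) : pbool P = false ↔ ¬ P := by
  unfold pbool; split <;> simp_all

/-- the pattern-color type used for the Ramsey argument -/
abbrev PatC : Type :=
  (Fin 4 → Fin 4 → Bool) × (Fin 4 → Fin 4 → Fin 4 → Bool) ×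
    (Fin 4 × Fin 4 → Fin 4 × Fin 4 → Bool)

section web

variable [DecidableEq V] (G : SimpleGraph V) (W : Finset V)
  (Λ : ∀ x y : V, x ∈ W → y ∈ W → x ≠ y → G.Walk x y)

/-- the interior of the web path joining `x` and `y`, as a finset (junk value `∅` if
`x, y` are not distinct members of `W`). -/
noncomputable def pintF (x y : V) : Finset V :=
  if h : x ∈ W ∧ y ∈ W ∧ x ≠ y then (Λ x y h.1 h.2.1 h.2.2).support.toFinset \ {x, y} else ∅

lemma coe_pintF {x y : V} (hx : x ∈ W) (hy : y ∈ W) (hxy : x ≠ y) :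
    (pintF G W Λ x y : Set V) = walkInterior G (Λ x y hx hy hxy) := by
  simp only [pintF, dif_pos (⟨hx, hy, hxy⟩ : x ∈ W ∧ y ∈ W ∧ x ≠ y)]
  ext u
  simp [walkInterior, not_or]

lemma pintF_self (x : V) : pintF G W Λ x x = ∅ := by
  simp [pintF]

lemma card_pintF {r : ℕ}
    (hlen : ∀ x y (hx : x ∈ W) (hy : y ∈ W) (hxy : x ≠ y), (Λ x y hx hy hxy).length ≤ r + 1)
    (x y : V) : (pintF G W Λ x y).card ≤ r := by
  rw [pintF]
  split
  · next h =>
    obtain ⟨hx, hy, hxy⟩ := h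
    set p := Λ x y hx hy hxy with hp
    have hsub : ({x, y} : Finset V) ⊆ p.support.toFinset := by
      intro u hu
      rw [List.mem_toFinset]
      rcases Finset.mem_insert.mp hu with rfl | hu
      · exact p.start_mem_support
      · rw [Finset.mem_singleton.mp hu]; exact p.end_mem_support
    rw [Finset.card_sdiff_of_subset hsub]
    have h1 : ({x, y} : Finset V).card = 2 := Finset.card_pair hxy
    have h2 : p.support.toFinset.card ≤ r + 2 := by
      refine le_trans (List.toFinset_card_le _) ?_
      rw [SimpleGraph.Walk.length_support]
      have := hlen x y hx hy hxy
      rw [← hp] at this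
      omega
    omega
  · simp

lemma pintF_symm (hW : IsWeb G W Λ) (x y : V) : pintF G W Λ x y = pintF G W Λ y x := by
  by_cases h : x ∈ W ∧ y ∈ W ∧ x ≠ y
  · have h' : y ∈ W ∧ x ∈ W ∧ y ≠ x := ⟨h.2.1, h.1, Ne.symm h.2.2⟩
    rw [pintF, pintF, dif_pos h, dif_pos h']
    have hrev : (Λ y x h'.1 h'.2.1 h'.2.2) = (Λ x y h.1 h.2.1 h.2.2).reverse :=
      hW.symm x y h.1 h.2.1 h.2.2
    rw [hrev]
    ext u
    simp only [Finset.mem_sdiff, List.mem_toFinset, SimpleGraph.Walk.support_reverse,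
      List.mem_reverse, Finset.mem_insert, Finset.mem_singleton]
    tauto
  · have h' : ¬ (y ∈ W ∧ x ∈ W ∧ y ≠ x) := by
      intro hc; exact h ⟨hc.2.1, hc.1, Ne.symm hc.2.2⟩
    rw [pintF, pintF, dif_neg h, dif_neg h']

lemma not_mem_pintF (hW : IsWeb G W Λ) {u x y : V} (hu : u ∈ W) (hux : u ≠ x) (huy : u ≠ y) :
    u ∉ pintF G W Λ x y := by
  rw [pintF]
  split
  · next h =>
    obtain ⟨hx, hy, hxy⟩ := h
    intro hmem
    rw [Finset.mem_sdiff, List.mem_toFinset] at hmem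
    have hne : ({x, y} : Set V) ≠ {u, x} := by
      intro heq
      have hy' : y ∈ ({u, x} : Set V) := heq ▸ (by simp : y ∈ ({x, y} : Set V))
      rcases hy' with h1 | h1
      · exact huy h1.symm
      · exact hxy h1.symm
    have hint := hW.inter x y u x hx hy hu hx hxy hux hne
    have humem : u ∈ walkVerts G (Λ x y hx hy hxy) ∩ walkVerts G (Λ u x hu hx hux) :=
      ⟨hmem.1, (Λ u x hu hx hux).start_mem_support⟩
    rw [hint] at humem
    rcases humem.1 with h1 | h1
    · exact hux h1
    · exact huy h1
  · simp

lemma pintF_disj (hW : IsWeb G W Λ) {x y x' y' : V} (hne : ({x, y} : Set V) ≠ {x', y'})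
    {u : V} (h1 : u ∈ pintF G W Λ x y) (h2 : u ∈ pintF G W Λ x' y') : False := by
  rw [pintF] at h1 h2
  by_cases g1 : x ∈ W ∧ y ∈ W ∧ x ≠ y
  swap
  · rw [dif_neg g1] at h1; exact absurd h1 (Finset.notMem_empty u)
  by_cases g2 : x' ∈ W ∧ y' ∈ W ∧ x' ≠ y'
  swap
  · rw [dif_neg g2] at h2; exact absurd h2 (Finset.notMem_empty u)
  rw [dif_pos g1] at h1
  rw [dif_pos g2] at h2
  rw [Finset.mem_sdiff, List.mem_toFinset] at h1 h2
  have hint := hW.inter x y x' y' g1.1 g1.2.1 g2.1 g2.2.1 g1.2.2 g2.2.2 hne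
  have humem : u ∈ ({x, y} : Set V) ∩ {x', y'} := by
    rw [← hint]; exact ⟨h1.1, h2.1⟩
  obtain ⟨hu1, -⟩ := humem
  simp only [Set.mem_insert_iff, Set.mem_singleton_iff] at hu1
  rcases hu1 with h | h
  · exact h1.2 (by simp [h])
  · exact h1.2 (by simp [h])

end web

section patsec

variable [DecidableEq V] (G : SimpleGraph V) (W : Finset V)
  (Λ : ∀ x y : V, x ∈ W → y ∈ W → x ≠ y → G.Walk x y)

/-- the pattern of adjacencies/attachments among four vertices and the web paths
joining them -/
noncomputable def patF (v : Fin 4 → V) : PatC :=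
  (fun i j => pbool (G.Adj (v i) (v j)),
   fun i j k => pbool (¬ Anticomplete G {v i} ↑(pintF G W Λ (v j) (v k))),
   fun p q => pbool ((({v p.1, v p.2} : Set V) ≠ {v q.1, v q.2}) ∧
     ¬ Anticomplete G ↑(pintF G W Λ (v p.1) (v p.2)) ↑(pintF G W Λ (v q.1) (v q.2))))

lemma patF1 (v : Fin 4 → V) (i j : Fin 4) :
    (patF G W Λ v).1 i j = pbool (G.Adj (v i) (v j)) := rfl

lemma patF2 (v : Fin 4 → V) (i j k : Fin 4) :
    (patF G W Λ v).2.1 i j k =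
      pbool (¬ Anticomplete G {v i} ↑(pintF G W Λ (v j) (v k))) := rfl

lemma patF3 (v : Fin 4 → V) (p q : Fin 4 × Fin 4) :
    (patF G W Λ v).2.2 p q = pbool ((({v p.1, v p.2} : Set V) ≠ {v q.1, v q.2}) ∧
      ¬ Anticomplete G ↑(pintF G W Λ (v p.1) (v p.2)) ↑(pintF G W Λ (v q.1) (v q.2))) := rfl

lemma anti_mono {X Y X' Y' : Set V} (h : Anticomplete G X Y) (h1 : X' ⊆ X) (h2 : Y' ⊆ Y) :
    Anticomplete G X' Y' := fun x hx y hy => h (h1 hx) (h2 hy)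

lemma pair_ne_pair {a b c d : V} (hac : a ≠ c) (had : a ≠ d) :
    ({a, b} : Set V) ≠ {c, d} := by
  intro heq
  have : a ∈ ({c, d} : Set V) := heq ▸ (by simp : a ∈ ({a, b} : Set V))
  rcases this with h | h
  · exact hac h
  · exact had h

lemma pair_ne_pair' {g a b : V} (hab : a ≠ b) (hag : a ≠ g) :
    ({g, a} : Set V) ≠ {g, b} := by
  intro heq
  have : a ∈ ({g, b} : Set V) := heq ▸ (by simp : a ∈ ({g, a} : Set V))
  rcases this with h | h
  · exact hag h
  · exact hab h

end patsec


/-- For all `r ∈ ℕ ∪ {0}` and `ξ, s ∈ ℕ⁺` there is `Ω ∈ ℕ⁺` such that for every graph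
`G` and every `(r, Ω)`-web `(W, Λ)` in `G`, one of the following holds:
(a) there are pairwise disjoint subsets `X_1, …, X_ξ` of `V(G)`, each of cardinality at
most `max {r+3, 2r}`, no two of which are anticomplete in `G`; or (b) there is an
`s`-subset `S ⊆ W` which is stable, with every `x ∈ S` anticomplete to `Λ*_{y,z}` for
all three vertices `x, y, z ∈ S`, and with `Λ*_{x,y}`, `Λ*_{x',y'}` anticomplete for
all distinct 2-subsets `{x,y}, {x',y'}` of `S`. -/
theorem statement_5 (r ξ s : ℕ) (hξ : 0 < ξ) (hs : 0 < s) :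
    ∃ Ω : ℕ, 0 < Ω ∧
      ∀ (V : Type) [Fintype V] [DecidableEq V] (G : SimpleGraph V) (W : Finset V)
        (Λ : ∀ x y : V, x ∈ W → y ∈ W → x ≠ y → G.Walk x y),
        IsWeb G W Λ → W.card = Ω →
        (∀ x y (hx : x ∈ W) (hy : y ∈ W) (hxy : x ≠ y), (Λ x y hx hy hxy).length ≤ r + 1) →
        -- (a)
        (∃ X : Fin ξ → Finset V,
          (∀ i j, i ≠ j → Disjoint (X i) (X j)) ∧
          (∀ i, (X i).card ≤ max (r + 3) (2 * r)) ∧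
          (∀ i j, i ≠ j → ¬ Anticomplete G ↑(X i) ↑(X j))) ∨
        -- (b)
        (∃ S : Finset V, S ⊆ W ∧ S.card = s ∧
          StableSet G ↑S ∧
          (∀ x ∈ S, ∀ y ∈ S, ∀ z ∈ S, x ≠ y → x ≠ z →
            ∀ (hy : y ∈ W) (hz : z ∈ W) (hyz : y ≠ z),
              Anticomplete G {x} (walkInterior G (Λ y z hy hz hyz))) ∧
          (∀ x ∈ S, ∀ y ∈ S, ∀ x' ∈ S, ∀ y' ∈ S,
            ∀ (hx : x ∈ W) (hy : y ∈ W) (hx' : x' ∈ W) (hy' : y' ∈ W)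
              (hxy : x ≠ y) (hxy' : x' ≠ y'), ({x, y} : Set V) ≠ {x', y'} →
              Anticomplete G (walkInterior G (Λ x y hx hy hxy))
                (walkInterior G (Λ x' y' hx' hy' hxy')))) := by
  classical
  obtain ⟨n, hn⟩ := rprop_exists PatC 4 (s + 4 * ξ + 8)
  set m := s + 4 * ξ + 8 with hm
  refine ⟨n + 1, Nat.succ_pos n, ?_⟩
  intro V _ _ G W Λ hWeb hWcard hlen
  have hWne : W.Nonempty := card_pos.mp (by rw [hWcard]; omega)
  have hV : Nonempty V := ⟨hWne.choose⟩
  set φ : V → ℕ := fun v => ((Fintype.equivFin V) v : ℕ) with hφdef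
  have hφinj : Function.Injective φ := by
    intro a b h
    exact (Fintype.equivFin V).injective (Fin.ext h)
  set ψ : ℕ → V := Function.invFun φ with hψdef
  have hψφ : ∀ v, ψ (φ v) = v := fun v => Function.leftInverse_invFun hφinj v
  set A : Finset ℕ := W.image φ with hAdef
  have hAcard : n ≤ A.card := by
    rw [hAdef, Finset.card_image_of_injective W hφinj, hWcard]; omega
  obtain ⟨B, hBA, hBcard, c₀, hmono⟩ :=
    hn (fun t => patF G W Λ (fun i => ψ ((t.sort (· ≤ ·)).getD (i : ℕ) 0))) A hAcard
  -- key evaluation of the color on increasing quadruples from B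
  have key : ∀ b : Fin 4 → ℕ, StrictMono b → (∀ i, b i ∈ B) →
      patF G W Λ (fun i => ψ (b i)) = c₀ := by
    intro b hb hbB
    have h01 : b 0 < b 1 := hb (by decide)
    have h12 : b 1 < b 2 := hb (by decide)
    have h23 : b 2 < b 3 := hb (by decide)
    have hnodup : [b 0, b 1, b 2, b 3].Nodup := by
      rw [List.nodup_cons, List.nodup_cons, List.nodup_cons]
      refine ⟨?_, ?_, ?_, List.nodup_singleton _⟩
      · simp only [List.mem_cons, List.mem_singleton, List.not_mem_nil, or_false, not_or]
        omega
      · simp only [List.mem_cons, List.mem_singleton, List.not_mem_nil, or_false, not_or]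
        omega
      · simp only [List.mem_singleton, List.mem_cons, List.not_mem_nil, or_false, not_or]
        omega
    have hsorted : List.Pairwise (· ≤ ·) [b 0, b 1, b 2, b 3] := by
      rw [List.pairwise_cons, List.pairwise_cons, List.pairwise_cons]
      refine ⟨?_, ?_, ?_, List.pairwise_singleton _ _⟩
      · intro c hc
        simp only [List.mem_cons, List.mem_singleton, List.not_mem_nil, or_false] at hc
        rcases hc with rfl | rfl | rfl <;> omega
      · intro c hc
        simp only [List.mem_cons, List.mem_singleton, List.not_mem_nil, or_false] at hc
        rcases hc with rfl | rfl <;> omega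
      · intro c hc
        simp only [List.mem_singleton, List.mem_cons, List.not_mem_nil, or_false] at hc
        subst hc; omega
    have hteq : ({b 0, b 1, b 2, b 3} : Finset ℕ) = [b 0, b 1, b 2, b 3].toFinset := by
      simp
    have hsort : ({b 0, b 1, b 2, b 3} : Finset ℕ).sort (· ≤ ·) = [b 0, b 1, b 2, b 3] := by
      rw [hteq]
      exact (List.toFinset_sort (r := (· ≤ ·)) hnodup).mpr hsorted
    have hcard : ({b 0, b 1, b 2, b 3} : Finset ℕ).card = 4 := by
      have := congrArg List.length hsort
      rwa [Finset.length_sort] at this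
    have hsub : ({b 0, b 1, b 2, b 3} : Finset ℕ) ⊆ B := by
      intro x hx
      simp only [Finset.mem_insert, Finset.mem_singleton] at hx
      rcases hx with rfl | rfl | rfl | rfl
      exacts [hbB 0, hbB 1, hbB 2, hbB 3]
    have hc := hmono _ hsub hcard
    rw [← hc]
    congr 1
    funext i
    rw [hsort]
    fin_cases i <;> rfl
  -- the vertices of B, in increasing order
  set e : Fin m ↪o ℕ := B.orderEmbOfFin hBcard with hedef
  have heB : ∀ i, e i ∈ B := fun i => B.orderEmbOfFin_mem hBcard i
  set w : Fin m → V := fun i => ψ (e i) with hwdef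
  have hwW : ∀ i, w i ∈ W := by
    intro i
    obtain ⟨x, hxW, hx⟩ := Finset.mem_image.mp (hBA (heB i))
    have : w i = x := by rw [hwdef]; simp only []; rw [← hx, hψφ]
    rw [this]; exact hxW
  have hφψ : ∀ a ∈ A, φ (ψ a) = a := by
    intro a ha
    obtain ⟨x, _, hx⟩ := Finset.mem_image.mp ha
    rw [← hx, hψφ]
  have hwinj : ∀ i j, w i = w j → i = j := by
    intro i j h
    have h' : φ (w i) = φ (w j) := congrArg φ h
    rw [hwdef] at h'
    simp only [] at h'
    rw [hφψ _ (hBA (heB i)), hφψ _ (hBA (heB j))] at h'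
    exact e.injective (by exact_mod_cast h')
  have master : ∀ σ : Fin 4 → Fin m, StrictMono σ →
      patF G W Λ (fun i => w (σ i)) = c₀ := by
    intro σ hσ
    exact key (fun i => e (σ i)) (e.strictMono.comp hσ) (fun i => heB (σ i))
  -- zone vertices
  have hidx : ∀ (p : Fin 4) (t : ℕ), (p : ℕ) * (ξ + 2) + min t (ξ + 1) < m := by
    intro p t
    have hp : (p : ℕ) ≤ 3 := Nat.lt_succ_iff.mp p.isLt
    have h1 : (p : ℕ) * (ξ + 2) ≤ 3 * (ξ + 2) := Nat.mul_le_mul_right _ hp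
    have h2 := min_le_right t (ξ + 1)
    omega
  set Z : Fin 4 → ℕ → V :=
    fun p t => w ⟨(p : ℕ) * (ξ + 2) + min t (ξ + 1), hidx p t⟩ with hZdef
  have hZW : ∀ p t, Z p t ∈ W := by
    intro p t; rw [hZdef]; exact hwW _
  have hZmono : ∀ slot : Fin 4 → ℕ, StrictMono (fun i : Fin 4 =>
      (⟨(i : ℕ) * (ξ + 2) + min (slot i) (ξ + 1), hidx i (slot i)⟩ : Fin m)) := by
    intro slot i j hij
    simp only [Fin.mk_lt_mk]
    have hij' : (i : ℕ) < (j : ℕ) := hij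
    have h1 : min (slot i) (ξ + 1) ≤ ξ + 1 := min_le_right _ _
    have h2 : ((i : ℕ) + 1) * (ξ + 2) ≤ (j : ℕ) * (ξ + 2) := Nat.mul_le_mul_right _ hij'
    have h3 : ((i : ℕ) + 1) * (ξ + 2) = (i : ℕ) * (ξ + 2) + (ξ + 2) := by ring
    omega
  have masterZ : ∀ slot : Fin 4 → ℕ, patF G W Λ (fun i => Z i (slot i)) = c₀ := by
    intro slot
    rw [hZdef]
    exact master _ (hZmono slot)
  have hZne : ∀ (p p' : Fin 4) (t t' : ℕ), t ≤ ξ + 1 → t' ≤ ξ + 1 →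
      (p ≠ p' ∨ t ≠ t') → Z p t ≠ Z p' t' := by
    intro p p' t t' ht ht' hne heq
    rw [hZdef] at heq
    simp only [] at heq
    have hfin := hwinj _ _ heq
    rw [Fin.mk.injEq] at hfin
    have hval := hfin
    rw [min_eq_left ht, min_eq_left ht'] at hval
    have hpp : (p : ℕ) = (p' : ℕ) ∧ t = t' := by
      rcases Nat.lt_trichotomy (p : ℕ) (p' : ℕ) with h | h | h
      · exfalso
        have h2 : ((p : ℕ) + 1) * (ξ + 2) ≤ (p' : ℕ) * (ξ + 2) := Nat.mul_le_mul_right _ h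
        have h3 : ((p : ℕ) + 1) * (ξ + 2) = (p : ℕ) * (ξ + 2) + (ξ + 2) := by ring
        omega
      · refine ⟨h, ?_⟩
        rw [h] at hval
        omega
      · exfalso
        have h2 : ((p' : ℕ) + 1) * (ξ + 2) ≤ (p : ℕ) * (ξ + 2) := Nat.mul_le_mul_right _ h
        have h3 : ((p' : ℕ) + 1) * (ξ + 2) = (p' : ℕ) * (ξ + 2) + (ξ + 2) := by ring
        omega
    rcases hne with hne | hne
    · exact hne (Fin.ext hpp.1)
    · exact hne hpp.2
  -- bit extraction lemmas, true versions (on zone vertices)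
  have ext1 : ∀ (slot : Fin 4 → ℕ) (i j : Fin 4), c₀.1 i j = true →
      G.Adj (Z i (slot i)) (Z j (slot j)) := by
    intro slot i j hbit
    have h := congrArg (fun x : PatC => x.1 i j) (masterZ slot)
    rw [patF1, hbit] at h
    exact (pbool_iff _).mp h
  have ext2 : ∀ (slot : Fin 4 → ℕ) (i j k : Fin 4), c₀.2.1 i j k = true →
      ¬ Anticomplete G {Z i (slot i)} ↑(pintF G W Λ (Z j (slot j)) (Z k (slot k))) := by
    intro slot i j k hbit
    have h := congrArg (fun x : PatC => x.2.1 i j k) (masterZ slot)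
    rw [patF2, hbit] at h
    exact (pbool_iff _).mp h
  have ext3 : ∀ (slot : Fin 4 → ℕ) (i j k l : Fin 4), c₀.2.2 (i, j) (k, l) = true →
      (({Z i (slot i), Z j (slot j)} : Set V) ≠ {Z k (slot k), Z l (slot l)}) ∧
      ¬ Anticomplete G ↑(pintF G W Λ (Z i (slot i)) (Z j (slot j)))
        ↑(pintF G W Λ (Z k (slot k)) (Z l (slot l))) := by
    intro slot i j k l hbit
    have h := congrArg (fun x : PatC => x.2.2 (i, j) (k, l)) (masterZ slot)
    rw [patF3, hbit] at h
    exact (pbool_iff _).mp h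
  -- case analysis on which bits of c₀ are set
  by_cases hc1 : ∃ i j : Fin 4, c₀.1 i j = true
  · -- (a) via an adjacency bit
    obtain ⟨i, j, hbit⟩ := hc1
    have adj0 := ext1 (fun _ => 0) i j hbit
    have hij : i ≠ j := by rintro rfl; exact G.irrefl adj0
    left
    refine ⟨fun t => {Z i (t : ℕ), Z j (t : ℕ)}, ?_, ?_, ?_⟩
    · intro t t' htt'
      have htne : (t : ℕ) ≠ (t' : ℕ) := fun h => htt' (Fin.ext h)
      have hb : (t : ℕ) ≤ ξ + 1 := by have := t.isLt; omega
      have hb' : (t' : ℕ) ≤ ξ + 1 := by have := t'.isLt; omega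
      rw [Finset.disjoint_left]
      intro u hu hu'
      simp only [Finset.mem_insert, Finset.mem_singleton] at hu hu'
      rcases hu with rfl | rfl <;> rcases hu' with h | h
      · exact hZne i i _ _ hb hb' (Or.inr htne) h
      · exact hZne i j _ _ hb hb' (Or.inl hij) h
      · exact hZne j i _ _ hb hb' (Or.inl hij.symm) h
      · exact hZne j j _ _ hb hb' (Or.inr htne) h
    · intro t
      refine le_trans (Finset.card_insert_le _ _) ?_
      rw [Finset.card_singleton]
      exact le_trans (by omega) (le_max_left (r + 3) (2 * r))
    · intro t t' htt' hanti
      have hadj0 := ext1 (fun p => if p = i then (t : ℕ) else (t' : ℕ)) i j hbit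
      have hadj : G.Adj (Z i (t : ℕ)) (Z j (t' : ℕ)) := by
        simpa [Ne.symm hij] using hadj0
      exact hanti (by simp : Z i (t : ℕ) ∈ (({Z i (t : ℕ), Z j (t : ℕ)} : Finset V) : Set V))
        (by simp : Z j (t' : ℕ) ∈ (({Z i (t' : ℕ), Z j (t' : ℕ)} : Finset V) : Set V)) hadj
  by_cases hc2 : ∃ i j k : Fin 4, (i ≠ j ∧ i ≠ k) ∧ c₀.2.1 i j k = true
  · -- (a) via a vertex-to-interior bit
    obtain ⟨i, j, k, ⟨hij, hik⟩, hbit⟩ := hc2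
    have hjk : j ≠ k := by
      rintro rfl
      have h0 := ext2 (fun _ => 0) i j j hbit
      rw [pintF_self] at h0
      exact h0 (fun a _ b hb => by simp at hb)
    left
    refine ⟨fun t => insert (Z i (t : ℕ)) (pintF G W Λ (Z j (t : ℕ)) (Z k (t : ℕ))), ?_, ?_, ?_⟩
    · intro t t' htt'
      have htne : (t : ℕ) ≠ (t' : ℕ) := fun h => htt' (Fin.ext h)
      have hb : (t : ℕ) ≤ ξ + 1 := by have := t.isLt; omega
      have hb' : (t' : ℕ) ≤ ξ + 1 := by have := t'.isLt; omega
      rw [Finset.disjoint_left]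
      intro u hu hu'
      rcases Finset.mem_insert.mp hu with rfl | hu2 <;>
        rcases Finset.mem_insert.mp hu' with h | h
      · exact hZne i i _ _ hb hb' (Or.inr htne) h
      · exact not_mem_pintF G W Λ hWeb (hZW i _)
          (hZne i j _ _ hb hb' (Or.inl hij)) (hZne i k _ _ hb hb' (Or.inl hik)) h
      · rw [h] at hu2
        exact not_mem_pintF G W Λ hWeb (hZW i _)
          (hZne i j _ _ hb' hb (Or.inl hij)) (hZne i k _ _ hb' hb (Or.inl hik)) hu2
      · exact pintF_disj G W Λ hWeb
          (pair_ne_pair (hZne j j _ _ hb hb' (Or.inr htne)) (hZne j k _ _ hb hb' (Or.inl hjk)))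
          hu2 h
    · intro t
      refine le_trans (Finset.card_insert_le _ _) ?_
      have := card_pintF G W Λ hlen (Z j (t : ℕ)) (Z k (t : ℕ))
      exact le_trans (by omega) (le_max_left (r + 3) (2 * r))
    · intro t t' htt' hanti
      have h0 := ext2 (fun p => if p = i then (t : ℕ) else (t' : ℕ)) i j k hbit
      have h : ¬ Anticomplete G {Z i (t : ℕ)}
          ↑(pintF G W Λ (Z j (t' : ℕ)) (Z k (t' : ℕ))) := by
        simpa [Ne.symm hij, Ne.symm hik] using h0
      refine h (anti_mono G hanti ?_ ?_)
      · rw [Set.singleton_subset_iff]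
        exact Finset.mem_coe.mpr (Finset.mem_insert_self _ _)
      · exact Finset.coe_subset.mpr (Finset.subset_insert _ _)
  by_cases hc3 : ∃ pq : (Fin 4 × Fin 4) × Fin 4 × Fin 4, c₀.2.2 pq.1 pq.2 = true
  · -- (a) via an interior-to-interior bit
    obtain ⟨⟨⟨i, j⟩, k, l⟩, hbit⟩ := hc3
    have h0 := ext3 (fun _ => 0) i j k l hbit
    have hij : i ≠ j := by
      rintro rfl
      refine h0.2 (fun a ha b _ => ?_)
      rw [pintF_self] at ha
      simp at ha
    have hkl : k ≠ l := by
      rintro rfl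
      refine h0.2 (fun a _ b hb => ?_)
      rw [pintF_self] at hb
      simp at hb
    have hpairne : ¬ ((i = k ∧ j = l) ∨ (i = l ∧ j = k)) := by
      rintro (⟨rfl, rfl⟩ | ⟨rfl, rfl⟩)
      · exact h0.1 rfl
      · exact h0.1 (Set.pair_comm _ _)
    left
    -- helper facts about slots
    have hbξ : (ξ : ℕ) ≤ ξ + 1 := by omega
    have hbt : ∀ t : Fin ξ, (t : ℕ) ≤ ξ + 1 := fun t => by have := t.isLt; omega
    have hbtξ : ∀ t : Fin ξ, (t : ℕ) ≠ ξ := fun t => by have := t.isLt; omega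
    -- generic construction when the two pairs share the position p₀
    have shared : ∀ (p₀ a b : Fin 4), p₀ ≠ a → p₀ ≠ b → a ≠ b →
        (∀ t t' : Fin ξ, ¬ Anticomplete G ↑(pintF G W Λ (Z p₀ ξ) (Z a (t : ℕ)))
          ↑(pintF G W Λ (Z p₀ ξ) (Z b (t' : ℕ)))) →
        (∃ X : Fin ξ → Finset V,
          (∀ i j, i ≠ j → Disjoint (X i) (X j)) ∧
          (∀ i, (X i).card ≤ max (r + 3) (2 * r)) ∧
          (∀ i j, i ≠ j → ¬ Anticomplete G ↑(X i) ↑(X j))) := by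
      intro p₀ a b hpa hpb hab hedge
      have hgne : ∀ (q : Fin 4) (t : Fin ξ), Z q (t : ℕ) ≠ Z p₀ ξ := by
        intro q t
        by_cases hq : q = p₀
        · subst hq; exact hZne q q _ _ (hbt t) hbξ (Or.inr (hbtξ t))
        · exact hZne q p₀ _ _ (hbt t) hbξ (Or.inl hq)
      refine ⟨fun t => pintF G W Λ (Z p₀ ξ) (Z a (t : ℕ)) ∪ pintF G W Λ (Z p₀ ξ) (Z b (t : ℕ)),
        ?_, ?_, ?_⟩
      · intro t t' htt'
        have htne : (t : ℕ) ≠ (t' : ℕ) := fun h => htt' (Fin.ext h)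
        rw [Finset.disjoint_left]
        intro u hu hu'
        rcases Finset.mem_union.mp hu with h1 | h1 <;>
          rcases Finset.mem_union.mp hu' with h2 | h2
        · exact pintF_disj G W Λ hWeb
            (pair_ne_pair' (hZne a a _ _ (hbt t) (hbt t') (Or.inr htne)) (hgne a t)) h1 h2
        · exact pintF_disj G W Λ hWeb
            (pair_ne_pair' (hZne a b _ _ (hbt t) (hbt t') (Or.inl hab)) (hgne a t)) h1 h2
        · exact pintF_disj G W Λ hWeb
            (pair_ne_pair' (hZne b a _ _ (hbt t) (hbt t') (Or.inl hab.symm)) (hgne b t)) h1 h2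
        · exact pintF_disj G W Λ hWeb
            (pair_ne_pair' (hZne b b _ _ (hbt t) (hbt t') (Or.inr htne)) (hgne b t)) h1 h2
      · intro t
        refine le_trans (Finset.card_union_le _ _) ?_
        have c1 := card_pintF G W Λ hlen (Z p₀ ξ) (Z a (t : ℕ))
        have c2 := card_pintF G W Λ hlen (Z p₀ ξ) (Z b (t : ℕ))
        exact le_trans (by omega) (le_max_right (r + 3) (2 * r))
      · intro t t' htt' hanti
        refine hedge t t' (anti_mono G hanti ?_ ?_)
        · exact Finset.coe_subset.mpr (Finset.subset_union_left)
        · exact Finset.coe_subset.mpr (Finset.subset_union_right)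
    by_cases hik : i = k
    · -- shared first coordinates
      subst hik
      have hjl : j ≠ l := fun h => hpairne (Or.inl ⟨rfl, h⟩)
      refine shared i j l hij (hkl) hjl ?_
      intro t t'
      have h0 := (ext3 (fun p => if p = i then (ξ : ℕ) else if p = j then (t : ℕ) else (t' : ℕ))
        i j i l hbit).2
      have h : ¬ Anticomplete G ↑(pintF G W Λ (Z i ξ) (Z j (t : ℕ)))
          ↑(pintF G W Λ (Z i ξ) (Z l (t' : ℕ))) := by
        simpa [Ne.symm hij, Ne.symm hkl, Ne.symm hjl] using h0
      exact h
    by_cases hil : i = l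
    · -- i is the second coordinate of the second pair
      subst hil
      have hjk : j ≠ k := fun h => hpairne (Or.inr ⟨rfl, h⟩)
      refine shared i j k hij (Ne.symm hkl) hjk ?_
      intro t t'
      have h0 := (ext3 (fun p => if p = i then (ξ : ℕ) else if p = j then (t : ℕ) else (t' : ℕ))
        i j k i hbit).2
      have h : ¬ Anticomplete G ↑(pintF G W Λ (Z i ξ) (Z j (t : ℕ)))
          ↑(pintF G W Λ (Z k (t' : ℕ)) (Z i ξ)) := by
        simpa [Ne.symm hij, hkl, Ne.symm hjk] using h0
      rw [pintF_symm G W Λ hWeb (Z k (t' : ℕ)) (Z i ξ)] at h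
      exact h
    by_cases hjk : j = k
    · -- j is the first coordinate of the second pair
      subst hjk
      refine shared j i l hij.symm hkl (fun h => hil h) ?_
      intro t t'
      have h0 := (ext3 (fun p => if p = j then (ξ : ℕ) else if p = i then (t : ℕ) else (t' : ℕ))
        i j j l hbit).2
      have h : ¬ Anticomplete G ↑(pintF G W Λ (Z i (t : ℕ)) (Z j ξ))
          ↑(pintF G W Λ (Z j ξ) (Z l (t' : ℕ))) := by
        simpa [hij, Ne.symm hkl, Ne.symm hil] using h0
      rw [pintF_symm G W Λ hWeb (Z i (t : ℕ)) (Z j ξ)] at h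
      exact h
    by_cases hjl : j = l
    · -- j is the second coordinate of the second pair
      subst hjl
      refine shared j i k hij.symm hjk hik ?_
      intro t t'
      have h0 := (ext3 (fun p => if p = j then (ξ : ℕ) else if p = i then (t : ℕ) else (t' : ℕ))
        i j k j hbit).2
      have h : ¬ Anticomplete G ↑(pintF G W Λ (Z i (t : ℕ)) (Z j ξ))
          ↑(pintF G W Λ (Z k (t' : ℕ)) (Z j ξ)) := by
        simpa [hij, hkl, Ne.symm hik] using h0
      rw [pintF_symm G W Λ hWeb (Z i (t : ℕ)) (Z j ξ),
        pintF_symm G W Λ hWeb (Z k (t' : ℕ)) (Z j ξ)] at h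
      exact h
    · -- the two pairs are disjoint
      refine ⟨fun t => pintF G W Λ (Z i (t : ℕ)) (Z j (t : ℕ)) ∪
        pintF G W Λ (Z k (t : ℕ)) (Z l (t : ℕ)), ?_, ?_, ?_⟩
      · intro t t' htt'
        have htne : (t : ℕ) ≠ (t' : ℕ) := fun h => htt' (Fin.ext h)
        rw [Finset.disjoint_left]
        intro u hu hu'
        rcases Finset.mem_union.mp hu with h1 | h1 <;>
          rcases Finset.mem_union.mp hu' with h2 | h2
        · exact pintF_disj G W Λ hWeb (pair_ne_pair
            (hZne i i _ _ (hbt t) (hbt t') (Or.inr htne))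
            (hZne i j _ _ (hbt t) (hbt t') (Or.inl hij))) h1 h2
        · exact pintF_disj G W Λ hWeb (pair_ne_pair
            (hZne i k _ _ (hbt t) (hbt t') (Or.inl (fun h => hik h)))
            (hZne i l _ _ (hbt t) (hbt t') (Or.inl (fun h => hil h)))) h1 h2
        · exact pintF_disj G W Λ hWeb (pair_ne_pair
            (hZne k i _ _ (hbt t) (hbt t') (Or.inl (fun h => hik h.symm)))
            (hZne k j _ _ (hbt t) (hbt t') (Or.inl (fun h => hjk h.symm)))) h1 h2
        · exact pintF_disj G W Λ hWeb (pair_ne_pair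
            (hZne k k _ _ (hbt t) (hbt t') (Or.inr htne))
            (hZne k l _ _ (hbt t) (hbt t') (Or.inl hkl))) h1 h2
      · intro t
        refine le_trans (Finset.card_union_le _ _) ?_
        have c1 := card_pintF G W Λ hlen (Z i (t : ℕ)) (Z j (t : ℕ))
        have c2 := card_pintF G W Λ hlen (Z k (t : ℕ)) (Z l (t : ℕ))
        exact le_trans (by omega) (le_max_right (r + 3) (2 * r))
      · intro t t' htt' hanti
        have h0 := (ext3 (fun p => if p = i ∨ p = j then (t : ℕ) else (t' : ℕ)) i j k l hbit).2
        have h : ¬ Anticomplete G ↑(pintF G W Λ (Z i (t : ℕ)) (Z j (t : ℕ)))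
            ↑(pintF G W Λ (Z k (t' : ℕ)) (Z l (t' : ℕ))) := by
          simpa [Ne.symm hik, Ne.symm hjk, Ne.symm hil, Ne.symm hjl] using h0
        refine h (anti_mono G hanti ?_ ?_)
        · exact Finset.coe_subset.mpr (Finset.subset_union_left)
        · exact Finset.coe_subset.mpr (Finset.subset_union_right)
  · -- all relevant bits false: case (b)
    have hb1 : ∀ i j : Fin 4, c₀.1 i j = false := by
      intro i j
      cases h : c₀.1 i j with
      | false => rfl
      | true => exact absurd ⟨i, j, h⟩ hc1
    have hb2 : ∀ i j k : Fin 4, i ≠ j → i ≠ k → c₀.2.1 i j k = false := by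
      intro i j k hij hik
      cases h : c₀.2.1 i j k with
      | false => rfl
      | true => exact absurd ⟨i, j, k, ⟨hij, hik⟩, h⟩ hc2
    have hb3 : ∀ p q : Fin 4 × Fin 4, c₀.2.2 p q = false := by
      intro p q
      cases h : c₀.2.2 p q with
      | false => rfl
      | true => exact absurd ⟨(p, q), h⟩ hc3
    -- false-bit extraction lemmas
    have fext1 : ∀ (σ : Fin 4 → Fin m), StrictMono σ → ∀ i j : Fin 4,
        ¬ G.Adj (w (σ i)) (w (σ j)) := by
      intro σ hσ i j
      have h := congrArg (fun x : PatC => x.1 i j) (master σ hσ)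
      rw [patF1, hb1 i j] at h
      exact (pbool_false_iff _).mp h
    have fext2 : ∀ (σ : Fin 4 → Fin m), StrictMono σ → ∀ i j k : Fin 4, i ≠ j → i ≠ k →
        Anticomplete G {w (σ i)} ↑(pintF G W Λ (w (σ j)) (w (σ k))) := by
      intro σ hσ i j k hij hik
      have h := congrArg (fun x : PatC => x.2.1 i j k) (master σ hσ)
      rw [patF2, hb2 i j k hij hik] at h
      exact not_not.mp ((pbool_false_iff _).mp h)
    have fext3 : ∀ (σ : Fin 4 → Fin m), StrictMono σ → ∀ i j k l : Fin 4,
        (({w (σ i), w (σ j)} : Set V) ≠ {w (σ k), w (σ l)}) →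
        Anticomplete G ↑(pintF G W Λ (w (σ i)) (w (σ j)))
          ↑(pintF G W Λ (w (σ k)) (w (σ l))) := by
      intro σ hσ i j k l hne
      have h := congrArg (fun x : PatC => x.2.2 (i, j) (k, l)) (master σ hσ)
      rw [patF3, hb3 (i, j) (k, l)] at h
      by_contra hanti
      exact (pbool_false_iff _).mp h ⟨hne, hanti⟩
    -- any four indices are covered by a strictly monotone quadruple
    have cover : ∀ i j k l : Fin m, ∃ σ : Fin 4 → Fin m, StrictMono σ ∧
        (∃ a, σ a = i) ∧ (∃ a, σ a = j) ∧ (∃ a, σ a = k) ∧ (∃ a, σ a = l) := by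
      intro i j k l
      have hle : ({i, j, k, l} : Finset (Fin m)).card ≤ 4 := by
        have c1 := Finset.card_insert_le i ({j, k, l} : Finset (Fin m))
        have c2 := Finset.card_insert_le j ({k, l} : Finset (Fin m))
        have c3 := Finset.card_insert_le k ({l} : Finset (Fin m))
        have c4 : ({l} : Finset (Fin m)).card = 1 := Finset.card_singleton l
        omega
      have hm4 : 4 ≤ (Finset.univ : Finset (Fin m)).card := by
        rw [Finset.card_univ, Fintype.card_fin]; omega
      obtain ⟨u, hsu, -, hucard⟩ :=
        Finset.exists_subsuperset_card_eq (Finset.subset_univ ({i, j, k, l} : Finset (Fin m)))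
          hle hm4
      have hmem : ∀ x ∈ ({i, j, k, l} : Finset (Fin m)), ∃ a, u.orderEmbOfFin hucard a = x := by
        intro x hx
        have : x ∈ (u : Set (Fin m)) := hsu hx
        rw [← u.range_orderEmbOfFin hucard] at this
        exact this
      exact ⟨u.orderEmbOfFin hucard, (u.orderEmbOfFin hucard).strictMono,
        hmem i (by simp), hmem j (by simp), hmem k (by simp), hmem l (by simp)⟩
    right
    have hsm : s ≤ m := by omega
    refine ⟨Finset.image (fun i : Fin s => w ⟨(i : ℕ), by omega⟩) Finset.univ, ?_, ?_, ?_, ?_, ?_⟩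
    · intro x hx
      obtain ⟨i, -, rfl⟩ := Finset.mem_image.mp hx
      exact hwW _
    · rw [Finset.card_image_of_injective _ ?_, Finset.card_univ, Fintype.card_fin]
      intro a b h
      have h2 := hwinj _ _ h
      have h3 : (a : ℕ) = (b : ℕ) := congrArg (fun x : Fin m => (x : ℕ)) h2
      exact Fin.ext h3
    · -- stable
      intro x hx y hy hadj
      obtain ⟨ix, -, hxw⟩ := Finset.mem_image.mp (Finset.mem_coe.mp hx)
      obtain ⟨iy, -, hyw⟩ := Finset.mem_image.mp (Finset.mem_coe.mp hy)
      obtain ⟨σ, hσ, ⟨a, ha⟩, ⟨b, hb⟩, -, -⟩ := cover ⟨(ix : ℕ), by omega⟩ ⟨(iy : ℕ), by omega⟩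
        ⟨(ix : ℕ), by omega⟩ ⟨(iy : ℕ), by omega⟩
      exact fext1 σ hσ a b (by rw [ha, hb, hxw, hyw]; exact hadj)
    · -- vertex vs interior
      intro x hx y hy z hz hxy hxz hyW hzW hyz
      obtain ⟨ix, -, hxw⟩ := Finset.mem_image.mp hx
      obtain ⟨iy, -, hyw⟩ := Finset.mem_image.mp hy
      obtain ⟨iz, -, hzw⟩ := Finset.mem_image.mp hz
      obtain ⟨σ, hσ, ⟨a, ha⟩, ⟨b, hb⟩, ⟨c, hc⟩, -⟩ := cover ⟨(ix : ℕ), by omega⟩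
        ⟨(iy : ℕ), by omega⟩ ⟨(iz : ℕ), by omega⟩ ⟨(ix : ℕ), by omega⟩
      have hab : a ≠ b := by
        rintro rfl
        rw [ha] at hb
        exact hxy (by rw [← hxw, ← hyw, hb])
      have hac : a ≠ c := by
        rintro rfl
        rw [ha] at hc
        exact hxz (by rw [← hxw, ← hzw, hc])
      have hanti := fext2 σ hσ a b c hab hac
      rw [ha, hb, hc, hxw, hyw, hzw] at hanti
      rwa [coe_pintF G W Λ hyW hzW hyz] at hanti
    · -- interior vs interior
      intro x hx y hy x' hx' y' hy' hxW hyW hx'W hy'W hxy hx'y' hne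
      obtain ⟨i1, -, h1w⟩ := Finset.mem_image.mp hx
      obtain ⟨i2, -, h2w⟩ := Finset.mem_image.mp hy
      obtain ⟨i3, -, h3w⟩ := Finset.mem_image.mp hx'
      obtain ⟨i4, -, h4w⟩ := Finset.mem_image.mp hy'
      obtain ⟨σ, hσ, ⟨a, ha⟩, ⟨b, hb⟩, ⟨c, hc⟩, ⟨d, hd⟩⟩ := cover ⟨(i1 : ℕ), by omega⟩
        ⟨(i2 : ℕ), by omega⟩ ⟨(i3 : ℕ), by omega⟩ ⟨(i4 : ℕ), by omega⟩
      have hanti := fext3 σ hσ a b c d (by rw [ha, hb, hc, hd, h1w, h2w, h3w, h4w]; exact hne)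
      rw [ha, hb, hc, hd, h1w, h2w, h3w, h4w] at hanti
      rwa [coe_pintF G W Λ hxW hyW hxy, coe_pintF G W Λ hx'W hy'W hx'y'] at hanti
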